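/- Let y be a process such that each y_τ is 𝓕_τ-measurable and integrable, and y_τ = φ_0(τ) + Σ_{m=1}^p φ_m(τ) y_{τ−m} + u_τ almost surely for every τ ∈ ℤ, where u_τ = ε_τ + Σ_{j=1}^q θ_j(τ) ε_{τ−j}. Then for every t ∈ ℤ and every integer N ≥ 1, almost surely E[y_t | 𝓕_{t−N}] = Σ_{r=0}^{N−1} ξ_{t,r} φ_0(t−r) + ξ_{t,N} y_{t−N} + Σ_{m=1}^{p−1} Σ_{i=1}^{p−m} φ_{m+i}(t−N+i) ξ_{t,N−i} y_{t−N−m} + Σ_{r=N}^{N+q−1} ξ'_{t,r} ε_{t−r}. -/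

import Mathlib

open Finset

/-- The `k × k` solution matrix `Φ_{t,k}`: its (1-based) `(i,j)` entry is `-1` if `i = j-1`,
`φ_{1+i−j}(t−k+i)` if `0 ≤ i−j ≤ p−1`, and `0` otherwise. -/
noncomputable def PhiMat (p : ℕ) (φ : ℕ → ℤ → ℝ) (t : ℤ) (k : ℕ) :
    Matrix (Fin k) (Fin k) ℝ :=
  fun i j =>
    if (i : ℕ) + 1 = (j : ℕ) then -1
    else if (j : ℕ) ≤ (i : ℕ) ∧ (i : ℕ) - (j : ℕ) + 1 ≤ p then
      φ ((i : ℕ) - (j : ℕ) + 1) (t - (k : ℤ) + (i : ℕ) + 1)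
    else 0

/-- The Hessenbergian (Green function) `ξ_{t,k} = det Φ_{t,k}`, with the conventions
`ξ_{t,0} = 1` (empty determinant) and `ξ_{t,k} = 0` for `k < 0`. -/
noncomputable def xi (p : ℕ) (φ : ℕ → ℤ → ℝ) (t : ℤ) (k : ℤ) : ℝ :=
  if 0 ≤ k then (PhiMat p φ t k.toNat).det else 0

variable (p : ℕ) (φ : ℕ → ℤ → ℝ) (t : ℤ)

lemma xi_coe (k : ℕ) : xi p φ t k = (PhiMat p φ t k).det := by
  simp [xi]

lemma xi_neg {k : ℤ} (h : k < 0) : xi p φ t k = 0 := by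
  simp [xi, not_le.2 h]

lemma xi_zero : xi p φ t 0 = 1 := by
  simp [xi, Matrix.det_fin_zero]

lemma PhiMat_succ_succ (k : ℕ) (i j : Fin k) :
    PhiMat p φ t (k + 1) i.succ j.succ = PhiMat p φ t k i j := by
  simp only [PhiMat, Fin.val_succ]
  split_ifs with h1 h2 h3 h4 h5 h6 <;> try (first | rfl | omega)
  · congr 1 <;> [omega; push_cast] 
    omega

lemma PhiMat_zero_succ (k : ℕ) (c : Fin (k + 1)) (hc : (c : ℕ) ≠ 0) :
    PhiMat p φ t (k + 2) 0 c.succ = 0 := by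
  simp only [PhiMat, Fin.val_zero, Fin.val_succ]
  simp only [show ¬ (0 + 1 = (c : ℕ) + 1) by omega,
    show ¬ ((c : ℕ) + 1 ≤ 0 ∧ 0 - ((c : ℕ) + 1) + 1 ≤ p) by omega, ↓reduceIte]


lemma succAbove_succ_zero {n : ℕ} (j : Fin (n + 1)) : j.succ.succAbove 0 = 0 := by
  rw [Fin.succAbove_of_castSucc_lt]
  · rfl
  · simp [Fin.lt_def]

lemma minor_det : ∀ (n : ℕ) (i : Fin (n + 1)),
    ((PhiMat p φ t (n + 1)).submatrix i.succAbove Fin.succ).det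
      = (-1 : ℝ) ^ (i : ℕ) * (PhiMat p φ t (n - i)).det := by
  intro n
  induction n with
  | zero =>
    intro i
    fin_cases i
    simp [Matrix.det_fin_zero]
  | succ n IH =>
    intro i
    induction i using Fin.cases with
    | zero =>
      rw [Fin.succAbove_zero]
      have h : (PhiMat p φ t (n + 2)).submatrix Fin.succ Fin.succ = PhiMat p φ t (n + 1) := by
        ext r c
        exact PhiMat_succ_succ p φ t (n + 1) r c
      simp [h]
      rfl
    | succ j =>
      rw [Matrix.det_succ_row_zero]
      rw [Finset.sum_eq_single (0 : Fin (n + 1))]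
      · have e0 : ((PhiMat p φ t (n + 2)).submatrix (j.succ.succAbove) Fin.succ) 0 0 = -1 := by
          simp only [Matrix.submatrix_apply, succAbove_succ_zero]
          simp [PhiMat]
        have hsub : ((PhiMat p φ t (n + 2)).submatrix (j.succ.succAbove) Fin.succ).submatrix
            Fin.succ ((0 : Fin (n + 1)).succAbove)
            = (PhiMat p φ t (n + 1)).submatrix j.succAbove Fin.succ := by
          ext r c
          simp only [Matrix.submatrix_apply, Fin.succAbove_zero]
          rw [Fin.succ_succAbove_succ]
          exact PhiMat_succ_succ p φ t (n + 1) (j.succAbove r) c.succ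
        show (-1 : ℝ) ^ ((0 : Fin (n+1)) : ℕ) *
            ((PhiMat p φ t (n + 2)).submatrix (j.succ.succAbove) Fin.succ) 0 0 *
            (((PhiMat p φ t (n + 2)).submatrix (j.succ.succAbove) Fin.succ).submatrix
              Fin.succ ((0 : Fin (n + 1)).succAbove)).det = _
        rw [e0, hsub, IH j]
        have : ((j.succ : Fin (n+2)) : ℕ) = (j : ℕ) + 1 := rfl
        rw [this]
        have h2 : n + 1 - ((j : ℕ) + 1) = n - (j : ℕ) := by omega
        rw [h2, Fin.val_zero, pow_zero, pow_succ]
        ring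
      · intro c _ hc
        have hz : ((PhiMat p φ t (n + 2)).submatrix (j.succ.succAbove) Fin.succ) 0 c = 0 := by
          simp only [Matrix.submatrix_apply, succAbove_succ_zero]
          exact PhiMat_zero_succ p φ t n c (fun h => hc (Fin.ext h))
        rw [hz]
        ring
      · simp

lemma sum_Icc_eq_range (f : ℕ → ℝ) (a b : ℕ) :
    ∑ i ∈ Icc a b, f i = ∑ i ∈ Finset.range (b + 1 - a), f (a + i) := by
  rw [← Finset.Ico_add_one_right_eq_Icc, Finset.sum_Ico_eq_sum_range]

lemma xi_succ (n : ℕ) :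
    xi p φ t ((n : ℤ) + 1)
      = ∑ m ∈ Icc 1 p, φ m (t - ((n : ℤ) + 1) + m) * xi p φ t ((n : ℤ) + 1 - m) := by
  set g : ℕ → ℝ := fun i =>
    if i + 1 ≤ p then φ (i + 1) (t - ((n : ℤ) + 1) + (i + 1)) * xi p φ t ((n : ℤ) + 1 - (i + 1))
    else 0 with hg
  have h1 : xi p φ t ((n : ℤ) + 1) = (PhiMat p φ t (n + 1)).det := by
    rw [show ((n : ℤ) + 1) = ((n + 1 : ℕ) : ℤ) by push_cast; ring, xi_coe]
  have h2 : ∀ i : Fin (n + 1),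
      (-1 : ℝ) ^ (i : ℕ) * PhiMat p φ t (n + 1) i 0 *
        ((PhiMat p φ t (n + 1)).submatrix i.succAbove Fin.succ).det = g (i : ℕ) := by
    intro i
    rw [minor_det]
    have e : PhiMat p φ t (n + 1) i 0 = if (i : ℕ) + 1 ≤ p then
        φ ((i : ℕ) + 1) (t - ((n : ℤ) + 1) + ((i : ℕ) + 1)) else 0 := by
      simp only [PhiMat, Fin.val_zero]
      simp only [show ¬ ((i : ℕ) + 1 = 0) by omega, ↓reduceIte]
      by_cases h : (i : ℕ) + 1 ≤ p
      · simp only [show (0 ≤ (i : ℕ) ∧ (i : ℕ) - 0 + 1 ≤ p) from ⟨by omega, by omega⟩, h,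
          and_self, ↓reduceIte]
        congr 1 <;> omega
      · simp only [show ¬ (0 ≤ (i : ℕ) ∧ (i : ℕ) - 0 + 1 ≤ p) by omega, h, ↓reduceIte]
    have exi : (PhiMat p φ t (n - (i : ℕ))).det = xi p φ t ((n : ℤ) + 1 - ((i : ℕ) + 1)) := by
      rw [← xi_coe]
      congr 1
      have := i.isLt
      omega
    rw [e, exi]
    simp only [hg]
    have h4 : (-1 : ℝ) ^ (i : ℕ) * (-1) ^ (i : ℕ) = 1 := by
      rw [← pow_add]
      exact Even.neg_one_pow ⟨(i : ℕ), by ring⟩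
    split_ifs with h
    · rw [mul_mul_mul_comm, h4, one_mul]
    · simp
  have hL : xi p φ t ((n : ℤ) + 1) = ∑ i ∈ Finset.range (n + 1), g i := by
    rw [h1, Matrix.det_succ_column_zero, ← Fin.sum_univ_eq_sum_range]
    exact Finset.sum_congr rfl fun i _ => h2 i
  rw [hL]
  have hgz : ∀ x, n + 1 ≤ x → g x = 0 := by
    intro x hx
    simp only [hg]
    split_ifs with h
    · rw [xi_neg p φ t (by push_cast; omega), mul_zero]
    · rfl
  have hgzp : ∀ x, p ≤ x → g x = 0 := by
    intro x hx
    simp only [hg]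
    rw [if_neg (by omega)]
  have hext : ∑ i ∈ Finset.range (n + 1), g i = ∑ i ∈ Finset.range (max p (n + 1)), g i := by
    refine Finset.sum_subset (Finset.range_subset_range.2 (le_max_right _ _)) ?_
    intro x _ hx
    exact hgz x (by simpa using hx)
  have hRHS : ∑ m ∈ Icc 1 p, φ m (t - ((n : ℤ) + 1) + m) * xi p φ t ((n : ℤ) + 1 - m)
      = ∑ i ∈ Finset.range p, g i := by
    rw [sum_Icc_eq_range]
    simp only [Nat.add_sub_cancel]
    refine Finset.sum_congr rfl fun i hi => ?_
    simp only [Finset.mem_range] at hi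
    simp only [hg]
    rw [if_pos (by omega)]
    have e1 : (1 : ℕ) + i = i + 1 := by omega
    rw [e1]
    push_cast
    ring
  have hext2 : ∑ i ∈ Finset.range p, g i = ∑ i ∈ Finset.range (max p (n + 1)), g i := by
    refine Finset.sum_subset (Finset.range_subset_range.2 (le_max_left _ _)) ?_
    intro x _ hx
    exact hgzp x (by simpa using hx)
  rw [hRHS, hext, hext2]

lemma sum_Icc_peel {f : ℕ → ℝ} {a b : ℕ} (h : a ≤ b) :
    ∑ i ∈ Icc a b, f i = f a + ∑ i ∈ Icc (a + 1) b, f i := by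
  have he : Icc a b = insert a (Icc (a + 1) b) := by
    ext x
    simp only [Finset.mem_Icc, Finset.mem_insert]
    omega
  rw [he, Finset.sum_insert (by simp [Finset.mem_Icc])]

lemma xi_one (hp : 1 ≤ p) : xi p φ t ((1 : ℕ) : ℤ) = φ 1 t := by
  rw [xi_coe]
  rw [Matrix.det_fin_one]
  simp only [PhiMat]
  rw [if_neg (by omega), if_pos ⟨le_refl 0, by omega⟩]
  norm_num

lemma base_algebra (hp : 1 ≤ p) (hq : 1 ≤ q) (θ : ℕ → ℤ → ℝ) (Y E : ℤ → ℝ) :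
    φ 0 t + (∑ m ∈ Icc 1 p, φ m t * Y (t - m)) + ∑ j ∈ Icc 1 q, θ j t * E (t - j)
    = (∑ r ∈ Finset.range 1, xi p φ t r * φ 0 (t - r))
      + xi p φ t ((1 : ℕ) : ℤ) * Y (t - ((1 : ℕ) : ℤ))
      + (∑ m ∈ Icc 1 (p - 1), ∑ i ∈ Icc 1 (p - m),
          φ (m + i) (t - ((1 : ℕ) : ℤ) + i) * xi p φ t (((1 : ℕ) : ℤ) - i) * Y (t - ((1 : ℕ) : ℤ) - m))
      + ∑ r ∈ Icc 1 (1 + q - 1),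
          (∑ j ∈ Icc (r - 1 + 1) q, θ j (t - r + j) * xi p φ t ((r : ℤ) - j)) * E (t - r) := by
  have h0 : ∑ r ∈ Finset.range 1, xi p φ t r * φ 0 (t - r) = φ 0 t := by
    rw [Finset.sum_range_one]
    norm_num [xi_zero]
  -- ε part
  have h3 : ∑ r ∈ Icc 1 (1 + q - 1),
      (∑ j ∈ Icc (r - 1 + 1) q, θ j (t - r + j) * xi p φ t ((r : ℤ) - j)) * E (t - r)
      = ∑ j ∈ Icc 1 q, θ j t * E (t - j) := by
    have e1 : 1 + q - 1 = q := by omega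
    rw [e1]
    refine Finset.sum_congr rfl fun r hr => ?_
    simp only [Finset.mem_Icc] at hr
    have e2 : r - 1 + 1 = r := by omega
    rw [e2]
    have hinner : ∑ j ∈ Icc r q, θ j (t - r + j) * xi p φ t ((r : ℤ) - j) = θ r t := by
      rw [sum_Icc_peel hr.2]
      have e3 : t - (r : ℤ) + r = t := by ring
      rw [e3, sub_self, xi_zero, mul_one]
      have hz : ∑ j ∈ Icc (r + 1) q, θ j (t - r + j) * xi p φ t ((r : ℤ) - j) = 0 := by
        refine Finset.sum_eq_zero fun j hj => ?_
        simp only [Finset.mem_Icc] at hj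
        rw [xi_neg p φ t (by omega), mul_zero]
      rw [hz, add_zero]
    rw [hinner]
  -- y part
  have h2 : xi p φ t ((1 : ℕ) : ℤ) * Y (t - ((1 : ℕ) : ℤ))
      + (∑ m ∈ Icc 1 (p - 1), ∑ i ∈ Icc 1 (p - m),
          φ (m + i) (t - ((1 : ℕ) : ℤ) + i) * xi p φ t (((1 : ℕ) : ℤ) - i) * Y (t - ((1 : ℕ) : ℤ) - m))
      = ∑ m ∈ Icc 1 p, φ m t * Y (t - m) := by
    have hin : ∀ m ∈ Icc 1 (p - 1), (∑ i ∈ Icc 1 (p - m),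
        φ (m + i) (t - ((1 : ℕ) : ℤ) + i) * xi p φ t (((1 : ℕ) : ℤ) - i) * Y (t - ((1 : ℕ) : ℤ) - m))
        = φ (m + 1) t * Y (t - ((1 : ℕ) : ℤ) - m) := by
      intro m hm
      simp only [Finset.mem_Icc] at hm
      have hz : ∑ i ∈ Icc (1 + 1) (p - m),
          φ (m + i) (t - ((1 : ℕ) : ℤ) + i) * xi p φ t (((1 : ℕ) : ℤ) - i) * Y (t - ((1 : ℕ) : ℤ) - m) = 0 := by
        refine Finset.sum_eq_zero fun i hi => ?_
        simp only [Finset.mem_Icc] at hi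
        rw [xi_neg p φ t (by push_cast; omega)]
        ring
      rw [sum_Icc_peel (by omega : 1 ≤ p - m)]
      rw [hz]
      have e4 : t - ((1 : ℕ) : ℤ) + ((1 : ℕ) : ℤ) = t := by push_cast; ring
      have e5 : ((1 : ℕ) : ℤ) - ((1 : ℕ) : ℤ) = 0 := by norm_num
      rw [e4, e5, xi_zero]
      ring
    rw [Finset.sum_congr rfl hin, xi_one p φ t hp, sum_Icc_peel hp]
    have e6 : ∑ m ∈ Icc (1 + 1) p, φ m t * Y (t - m)
        = ∑ m ∈ Icc 1 (p - 1), φ (m + 1) t * Y (t - ((1 : ℕ) : ℤ) - m) := by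
      rw [sum_Icc_eq_range, sum_Icc_eq_range]
      have e7 : p + 1 - (1 + 1) = p - 1 + 1 - 1 := by omega
      rw [e7]
      refine Finset.sum_congr rfl fun k hk => ?_
      have e8 : 1 + 1 + k = (1 + k) + 1 := by omega
      have e9 : t - ((1 + 1 + k : ℕ) : ℤ) = t - ((1 : ℕ) : ℤ) - ((1 + k : ℕ) : ℤ) := by
        push_cast; ring
      rw [e9, e8]
    rw [e6]
  linarith [h0, h2, h3]

lemma sum_Icc2_eq_Icc1 (f g : ℕ → ℝ) (b c : ℕ) (hbc : b = c + 1)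
    (h : ∀ k, k < c → f (2 + k) = g (1 + k)) :
    ∑ i ∈ Icc 2 b, f i = ∑ i ∈ Icc 1 c, g i := by
  rw [sum_Icc_eq_range, sum_Icc_eq_range]
  have e : b + 1 - 2 = c + 1 - 1 := by omega
  rw [e]
  refine Finset.sum_congr rfl fun k hk => ?_
  simp only [Finset.mem_range] at hk
  exact h k (by omega)

lemma sum_Icc_shiftN (f g : ℕ → ℝ) (N q : ℕ)
    (h : ∀ k, k < q → f (N + 1 + k) = g (1 + k)) :
    ∑ r ∈ Icc (N + 1) (N + q), f r = ∑ j ∈ Icc 1 q, g j := by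
  rw [sum_Icc_eq_range, sum_Icc_eq_range]
  have e : N + q + 1 - (N + 1) = q + 1 - 1 := by omega
  rw [e]
  refine Finset.sum_congr rfl fun k hk => ?_
  simp only [Finset.mem_range] at hk
  exact h k (by omega)

lemma step_epsilon (hq : 1 ≤ q) (θ : ℕ → ℤ → ℝ) (N : ℕ) (E : ℤ → ℝ) :
    (∑ r ∈ Icc (N + 1) (N + q - 1),
        (∑ j ∈ Icc (r - N + 1) q, θ j (t - r + j) * xi p φ t ((r : ℤ) - j)) * E (t - r))
      + xi p φ t N * (∑ j ∈ Icc 1 q, θ j (t - N) * E (t - N - j))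
    = ∑ r ∈ Icc (N + 1) ((N + 1) + q - 1),
        (∑ j ∈ Icc (r - (N + 1) + 1) q, θ j (t - r + j) * xi p φ t ((r : ℤ) - j)) * E (t - r) := by
  have e1 : (N + 1) + q - 1 = N + q := by omega
  rw [e1]
  have hsplit : ∀ r ∈ Icc (N + 1) (N + q),
      (∑ j ∈ Icc (r - (N + 1) + 1) q, θ j (t - r + j) * xi p φ t ((r : ℤ) - j)) * E (t - r)
      = (∑ j ∈ Icc (r - N + 1) q, θ j (t - r + j) * xi p φ t ((r : ℤ) - j)) * E (t - r)
        + θ (r - N) (t - N) * xi p φ t N * E (t - r) := by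
    intro r hr
    simp only [Finset.mem_Icc] at hr
    have e2 : r - (N + 1) + 1 = r - N := by omega
    rw [e2, sum_Icc_peel (by omega : r - N ≤ q)]
    have e3 : t - (r : ℤ) + ((r - N : ℕ) : ℤ) = t - N := by
      have : ((r - N : ℕ) : ℤ) = (r : ℤ) - N := by omega
      rw [this]; ring
    have e4 : (r : ℤ) - ((r - N : ℕ) : ℤ) = (N : ℤ) := by omega
    rw [e3, e4]
    ring
  rw [Finset.sum_congr rfl hsplit, Finset.sum_add_distrib]
  have hA : ∑ r ∈ Icc (N + 1) (N + q),
      (∑ j ∈ Icc (r - N + 1) q, θ j (t - r + j) * xi p φ t ((r : ℤ) - j)) * E (t - r)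
      = ∑ r ∈ Icc (N + 1) (N + q - 1),
        (∑ j ∈ Icc (r - N + 1) q, θ j (t - r + j) * xi p φ t ((r : ℤ) - j)) * E (t - r) := by
    rw [eq_comm]
    refine Finset.sum_subset (Finset.Icc_subset_Icc_right (by omega)) ?_
    intro x hx hnx
    simp only [Finset.mem_Icc] at hx hnx
    have hxq : x = N + q := by omega
    have : Icc (x - N + 1) q = ∅ := Finset.Icc_eq_empty (by omega)
    rw [this, Finset.sum_empty, zero_mul]
  have hB : ∑ r ∈ Icc (N + 1) (N + q), θ (r - N) (t - N) * xi p φ t N * E (t - r)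
      = xi p φ t N * (∑ j ∈ Icc 1 q, θ j (t - N) * E (t - N - j)) := by
    rw [Finset.mul_sum]
    refine sum_Icc_shiftN _ _ _ _ fun k hk => ?_
    have e5 : N + 1 + k - N = 1 + k := by omega
    have e6 : t - ((N + 1 + k : ℕ) : ℤ) = t - (N : ℤ) - ((1 + k : ℕ) : ℤ) := by
      push_cast; ring
    rw [e5, e6]
    ring
  rw [hA, hB]

lemma step_y (hp : 1 ≤ p) (N : ℕ) (Y : ℤ → ℝ) :
    (∑ m ∈ Icc 1 (p - 1), ∑ i ∈ Icc 1 (p - m),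
        φ (m + i) (t - N + i) * xi p φ t ((N : ℤ) - i) * Y (t - N - m))
      + xi p φ t N * (∑ m ∈ Icc 1 p, φ m (t - N) * Y (t - N - m))
    = xi p φ t ((N + 1 : ℕ) : ℤ) * Y (t - ((N + 1 : ℕ) : ℤ))
      + (∑ m ∈ Icc 1 (p - 1), ∑ i ∈ Icc 1 (p - m),
          φ (m + i) (t - ((N + 1 : ℕ) : ℤ) + i) * xi p φ t (((N + 1 : ℕ) : ℤ) - i)
            * Y (t - ((N + 1 : ℕ) : ℤ) - m)) := by
  set D : ℕ → ℝ := fun m =>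
    if m = 1 then xi p φ t ((N : ℤ) + 1)
    else ∑ i ∈ Icc 1 (p - (m - 1)),
      φ (m - 1 + i) (t - (N : ℤ) - 1 + i) * xi p φ t ((N : ℤ) + 1 - i) with hD
  -- inner coefficient of the old double sum
  have hcoef : ∀ m, 1 ≤ m → m ≤ p →
      (∑ i ∈ Icc 1 (p - m), φ (m + i) (t - N + i) * xi p φ t ((N : ℤ) - i))
        + xi p φ t N * φ m (t - N) = D m := by
    intro m hm1 hmp
    by_cases h1 : m = 1
    · subst h1
      have hD1 : D 1 = xi p φ t ((N : ℤ) + 1) := by simp [hD]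
      rw [hD1, xi_succ p φ t N, sum_Icc_peel hp]
      have e1 : t - ((N : ℤ) + 1) + ((1 : ℕ) : ℤ) = t - N := by push_cast; ring
      have e2 : (N : ℤ) + 1 - ((1 : ℕ) : ℤ) = (N : ℤ) := by norm_num
      rw [e1, e2]
      have e3 : ∑ i ∈ Icc 2 p, φ i (t - ((N : ℤ) + 1) + i) * xi p φ t ((N : ℤ) + 1 - i)
          = ∑ i ∈ Icc 1 (p - 1), φ (1 + i) (t - N + i) * xi p φ t ((N : ℤ) - i) := by
        refine sum_Icc2_eq_Icc1 _ _ _ _ (by omega) fun k hk => ?_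
        have a1 : (2 : ℕ) + k = 1 + (1 + k) := by omega
        have a2 : t - ((N : ℤ) + 1) + ((2 + k : ℕ) : ℤ) = t - (N : ℤ) + ((1 + k : ℕ) : ℤ) := by
          push_cast; ring
        have a3 : (N : ℤ) + 1 - ((2 + k : ℕ) : ℤ) = (N : ℤ) - ((1 + k : ℕ) : ℤ) := by
          push_cast; ring
        rw [a2, a3, a1]
      rw [e3]
      ring
    · have hDm : D m = ∑ i ∈ Icc 1 (p - (m - 1)),
          φ (m - 1 + i) (t - (N : ℤ) - 1 + i) * xi p φ t ((N : ℤ) + 1 - i) := by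
        simp only [hD]
        rw [if_neg h1]
      rw [hDm, sum_Icc_peel (by omega : 1 ≤ p - (m - 1))]
      have e1 : m - 1 + 1 = m := by omega
      have e2 : t - (N : ℤ) - 1 + ((1 : ℕ) : ℤ) = t - N := by push_cast; ring
      have e3 : (N : ℤ) + 1 - ((1 : ℕ) : ℤ) = (N : ℤ) := by norm_num
      rw [e1, e2, e3]
      have e4 : ∑ i ∈ Icc 2 (p - (m - 1)),
          φ (m - 1 + i) (t - (N : ℤ) - 1 + i) * xi p φ t ((N : ℤ) + 1 - i)
          = ∑ i ∈ Icc 1 (p - m), φ (m + i) (t - N + i) * xi p φ t ((N : ℤ) - i) := by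
        refine sum_Icc2_eq_Icc1 _ _ _ _ (by omega) fun k hk => ?_
        have a1 : m - 1 + (2 + k) = m + (1 + k) := by omega
        have a2 : t - (N : ℤ) - 1 + ((2 + k : ℕ) : ℤ) = t - (N : ℤ) + ((1 + k : ℕ) : ℤ) := by
          push_cast; ring
        have a3 : (N : ℤ) + 1 - ((2 + k : ℕ) : ℤ) = (N : ℤ) - ((1 + k : ℕ) : ℤ) := by
          push_cast; ring
        rw [a1, a2, a3]
      rw [e4]
      ring
  -- LHS as a single sum over Icc 1 p
  have hLHS : (∑ m ∈ Icc 1 (p - 1), ∑ i ∈ Icc 1 (p - m),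
        φ (m + i) (t - N + i) * xi p φ t ((N : ℤ) - i) * Y (t - N - m))
      + xi p φ t N * (∑ m ∈ Icc 1 p, φ m (t - N) * Y (t - N - m))
      = ∑ m ∈ Icc 1 p, D m * Y (t - N - m) := by
    have hext : (∑ m ∈ Icc 1 (p - 1), ∑ i ∈ Icc 1 (p - m),
          φ (m + i) (t - N + i) * xi p φ t ((N : ℤ) - i) * Y (t - N - m))
        = ∑ m ∈ Icc 1 p, ∑ i ∈ Icc 1 (p - m),
          φ (m + i) (t - N + i) * xi p φ t ((N : ℤ) - i) * Y (t - N - m) := by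
      refine Finset.sum_subset (Finset.Icc_subset_Icc_right (by omega)) ?_
      intro x hx hnx
      simp only [Finset.mem_Icc] at hx hnx
      have : Icc 1 (p - x) = (∅ : Finset ℕ) := Finset.Icc_eq_empty (by omega)
      rw [this, Finset.sum_empty]
    rw [hext, Finset.mul_sum, ← Finset.sum_add_distrib]
    refine Finset.sum_congr rfl fun m hm => ?_
    simp only [Finset.mem_Icc] at hm
    rw [← hcoef m hm.1 hm.2, add_mul, Finset.sum_mul]
    ring
  -- RHS as the same sum
  have hRHS : xi p φ t ((N + 1 : ℕ) : ℤ) * Y (t - ((N + 1 : ℕ) : ℤ))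
      + (∑ m ∈ Icc 1 (p - 1), ∑ i ∈ Icc 1 (p - m),
          φ (m + i) (t - ((N + 1 : ℕ) : ℤ) + i) * xi p φ t (((N + 1 : ℕ) : ℤ) - i)
            * Y (t - ((N + 1 : ℕ) : ℤ) - m))
      = ∑ m ∈ Icc 1 p, D m * Y (t - N - m) := by
    rw [sum_Icc_peel hp]
    have hD1 : D 1 = xi p φ t ((N : ℤ) + 1) := by simp [hD]
    have c1 : ((N + 1 : ℕ) : ℤ) = (N : ℤ) + 1 := by push_cast; ring
    have c2 : t - ((N + 1 : ℕ) : ℤ) = t - (N : ℤ) - ((1 : ℕ) : ℤ) := by push_cast; ring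
    have htail : ∑ m ∈ Icc (1 + 1) p, D m * Y (t - N - m)
        = ∑ m ∈ Icc 1 (p - 1), ∑ i ∈ Icc 1 (p - m),
          φ (m + i) (t - ((N + 1 : ℕ) : ℤ) + i) * xi p φ t (((N + 1 : ℕ) : ℤ) - i)
            * Y (t - ((N + 1 : ℕ) : ℤ) - m) := by
      refine sum_Icc2_eq_Icc1 _ _ _ _ (by omega) fun k hk => ?_
      have hDk : D (2 + k) = ∑ i ∈ Icc 1 (p - (1 + k)),
          φ (1 + k + i) (t - (N : ℤ) - 1 + i) * xi p φ t ((N : ℤ) + 1 - i) := by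
        simp only [hD]
        rw [if_neg (by omega : ¬ (2 + k = 1))]
        have b0 : (2 : ℕ) + k - 1 = 1 + k := by omega
        rw [b0]
      rw [hDk]
      have hinner : ∑ i ∈ Icc 1 (p - (1 + k)),
          φ (1 + k + i) (t - (N : ℤ) - 1 + i) * xi p φ t ((N : ℤ) + 1 - i)
          = ∑ i ∈ Icc 1 (p - (1 + k)),
          φ ((1 + k) + i) (t - ((N + 1 : ℕ) : ℤ) + i) * xi p φ t (((N + 1 : ℕ) : ℤ) - i) := by
        refine Finset.sum_congr rfl fun i _ => ?_
        rw [c1]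
        have b1 : t - (N : ℤ) - 1 + (i : ℤ) = t - ((N : ℤ) + 1) + i := by ring
        rw [b1]
      have b2 : t - (N : ℤ) - ((2 + k : ℕ) : ℤ) = t - ((N + 1 : ℕ) : ℤ) - ((1 + k : ℕ) : ℤ) := by
        push_cast; ring
      rw [hinner, b2, Finset.sum_mul]
    have c3 : t - ((N : ℤ) + 1) = t - (N : ℤ) - ((1 : ℕ) : ℤ) := by push_cast; ring
    rw [htail, hD1, c1, c3]
  rw [hLHS, ← hRHS]

open MeasureTheory Filter

lemma condexp_decomp {Ω : Type*} {m0 : MeasurableSpace Ω} {μ : Measure Ω} [IsProbabilityMeasure μ]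
    {m : MeasurableSpace Ω} (hm : m ≤ m0) (g f e f' : Ω → ℝ) (a b : ℝ)
    (hgm : StronglyMeasurable[m] g) (hgi : Integrable g μ)
    (hfi : Integrable f μ) (hei : Integrable e μ)
    (hf' : μ[f|m] =ᵐ[μ] f') (he' : μ[e|m] =ᵐ[μ] 0) :
    μ[fun ω => g ω + a * f ω + b * e ω | m] =ᵐ[μ] fun ω => g ω + a * f' ω := by
  have h1 : (fun ω => g ω + a * f ω + b * e ω) = (g + a • f) + b • e := by
    funext ω; simp [smul_eq_mul]
  rw [h1]
  have hfa : Integrable (a • f) μ := hfi.smul a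
  have heb : Integrable (b • e) μ := hei.smul b
  calc μ[(g + a • f) + b • e|m]
      =ᵐ[μ] μ[g + a • f|m] + μ[b • e|m] := condExp_add (hgi.add hfa) heb _
    _ =ᵐ[μ] (μ[g|m] + μ[a • f|m]) + μ[b • e|m] :=
        (condExp_add hgi hfa _).add (EventuallyEq.refl _ _)
    _ =ᵐ[μ] (μ[g|m] + a • μ[f|m]) + b • μ[e|m] :=
        ((EventuallyEq.refl _ _).add (condExp_smul a f _)).add (condExp_smul b e _)
    _ =ᵐ[μ] fun ω => g ω + a * f' ω := by
        rw [condExp_of_stronglyMeasurable hm hgm hgi]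
        filter_upwards [hf', he'] with ω h2 h3
        simp only [Pi.add_apply, Pi.smul_apply, smul_eq_mul, h2]
        rw [h3]
        simp

open MeasureTheory Filter

/-- The `N`-step-ahead optimal linear predictor of a PARMA(`p,q`) process. -/
theorem parma_optimal_predictor
    (p : ℕ) (hp : 1 ≤ p) (φ : ℕ → ℤ → ℝ)
    (q : ℕ) (hq : 1 ≤ q) (θ : ℕ → ℤ → ℝ)
    {Ω : Type*} {m0 : MeasurableSpace Ω} {μ : Measure Ω} [IsProbabilityMeasure μ]
    (𝓕 : Filtration ℤ m0)
    (ε : ℤ → Ω → ℝ)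
    (hεmeas : ∀ τ : ℤ, StronglyMeasurable[𝓕 τ] (ε τ))
    (hεL2 : ∀ τ : ℤ, MemLp (ε τ) 2 μ)
    (hεmart : ∀ τ : ℤ, μ[ε τ | 𝓕 (τ - 1)] =ᵐ[μ] 0)
    (y : ℤ → Ω → ℝ)
    (hymeas : ∀ τ : ℤ, StronglyMeasurable[𝓕 τ] (y τ))
    (hyint : ∀ τ : ℤ, Integrable (y τ) μ)
    (u : ℤ → Ω → ℝ)
    (hu : ∀ τ : ℤ, ∀ ω, u τ ω = ε τ ω + ∑ j ∈ Finset.Icc 1 q, θ j τ * ε (τ - j) ω)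
    (hy : ∀ τ : ℤ, y τ =ᵐ[μ] fun ω =>
      φ 0 τ + (∑ m ∈ Finset.Icc 1 p, φ m τ * y (τ - m) ω) + u τ ω)
    (t : ℤ) (N : ℕ) (hN : 1 ≤ N) :
    μ[y t | 𝓕 (t - N)] =ᵐ[μ] fun ω =>
      (∑ r ∈ Finset.range N, xi p φ t r * φ 0 (t - r))
      + xi p φ t N * y (t - N) ω
      + (∑ m ∈ Finset.Icc 1 (p - 1), ∑ i ∈ Finset.Icc 1 (p - m),
          φ (m + i) (t - N + i) * xi p φ t ((N : ℤ) - i) * y (t - N - m) ω)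
      + ∑ r ∈ Finset.Icc N (N + q - 1),
          (∑ j ∈ Finset.Icc (r - N + 1) q,
            θ j (t - r + j) * xi p φ t ((r : ℤ) - j)) * ε (t - r) ω := by
  have hεint : ∀ τ : ℤ, Integrable (ε τ) μ := fun τ => (hεL2 τ).integrable one_le_two
  -- one-step prediction
  have onestep : ∀ τ : ℤ, μ[y τ | 𝓕 (τ - 1)] =ᵐ[μ] fun ω =>
      φ 0 τ + (∑ m ∈ Finset.Icc 1 p, φ m τ * y (τ - m) ω)
        + ∑ j ∈ Finset.Icc 1 q, θ j τ * ε (τ - j) ω := by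
    intro τ
    set g : Ω → ℝ := fun ω =>
      φ 0 τ + (∑ m ∈ Finset.Icc 1 p, φ m τ * y (τ - m) ω)
        + ∑ j ∈ Finset.Icc 1 q, θ j τ * ε (τ - j) ω with hgdef
    have hgm : StronglyMeasurable[𝓕 (τ - 1)] g := by
      apply StronglyMeasurable.add
      · apply StronglyMeasurable.add
        · exact stronglyMeasurable_const
        · refine Finset.stronglyMeasurable_fun_sum _ fun m hm => ?_
          simp only [Finset.mem_Icc] at hm
          exact stronglyMeasurable_const.mul
            ((hymeas (τ - m)).mono (𝓕.mono (by omega)))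
      · refine Finset.stronglyMeasurable_fun_sum _ fun j hj => ?_
        simp only [Finset.mem_Icc] at hj
        exact stronglyMeasurable_const.mul
          ((hεmeas (τ - j)).mono (𝓕.mono (by omega)))
    have hgi : Integrable g μ := by
      apply Integrable.add
      · apply Integrable.add
        · exact integrable_const _
        · exact integrable_finset_sum _ fun m _ => (hyint (τ - m)).const_mul _
      · exact integrable_finset_sum _ fun j _ => (hεint (τ - j)).const_mul _
    have hyg : y τ =ᵐ[μ] g + ε τ := by
      filter_upwards [hy τ] with ω h
      simp only [Pi.add_apply, hgdef]
      rw [h, hu τ ω]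
      ring
    calc μ[y τ | 𝓕 (τ - 1)]
        =ᵐ[μ] μ[g + ε τ | 𝓕 (τ - 1)] := condExp_congr_ae hyg
      _ =ᵐ[μ] μ[g | 𝓕 (τ - 1)] + μ[ε τ | 𝓕 (τ - 1)] := condExp_add hgi (hεint τ) _
      _ =ᵐ[μ] g := by
          rw [condExp_of_stronglyMeasurable (𝓕.le _) hgm hgi]
          filter_upwards [hεmart τ] with ω h
          simp only [Pi.add_apply, h, Pi.zero_apply, add_zero]
  induction N, hN using Nat.le_induction with
  | base =>
    have hidx : t - 1 = t - ((1 : ℕ) : ℤ) := by norm_num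
    have h := onestep t
    rw [hidx] at h
    refine h.trans (EventuallyEq.of_eq (funext fun ω => ?_))
    exact base_algebra p φ t hp hq θ (fun s => y s ω) (fun s => ε s ω)
  | succ N hN IH =>
    have hmle : 𝓕 (t - ((N + 1 : ℕ) : ℤ)) ≤ 𝓕 (t - (N : ℕ)) := 𝓕.mono (by push_cast; omega)
    set G : Ω → ℝ := fun ω =>
      (∑ r ∈ Finset.range N, xi p φ t r * φ 0 (t - r))
      + (∑ m ∈ Finset.Icc 1 (p - 1), ∑ i ∈ Finset.Icc 1 (p - m),
          φ (m + i) (t - N + i) * xi p φ t ((N : ℤ) - i) * y (t - N - m) ω)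
      + (∑ r ∈ Finset.Icc (N + 1) (N + q - 1),
          (∑ j ∈ Finset.Icc (r - N + 1) q,
            θ j (t - r + j) * xi p φ t ((r : ℤ) - j)) * ε (t - r) ω) with hGdef
    have hGm : StronglyMeasurable[𝓕 (t - ((N + 1 : ℕ) : ℤ))] G := by
      apply StronglyMeasurable.add
      · apply StronglyMeasurable.add
        · exact stronglyMeasurable_const
        · refine Finset.stronglyMeasurable_fun_sum _ fun m hm => ?_
          simp only [Finset.mem_Icc] at hm
          refine Finset.stronglyMeasurable_fun_sum _ fun i hi => ?_
          exact stronglyMeasurable_const.mul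
            ((hymeas (t - N - m)).mono (𝓕.mono (by push_cast; omega)))
      · refine Finset.stronglyMeasurable_fun_sum _ fun r hr => ?_
        simp only [Finset.mem_Icc] at hr
        exact stronglyMeasurable_const.mul
          ((hεmeas (t - r)).mono (𝓕.mono (by push_cast; omega)))
    have hGi : Integrable G μ := by
      apply Integrable.add
      · apply Integrable.add
        · exact integrable_const _
        · exact integrable_finset_sum _ fun m _ =>
            integrable_finset_sum _ fun i _ => (hyint (t - N - m)).const_mul _
      · exact integrable_finset_sum _ fun r _ => (hεint (t - r)).const_mul _
    have hone := onestep (t - (N : ℕ))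
    have hidx : t - ((N : ℕ) : ℤ) - 1 = t - ((N + 1 : ℕ) : ℤ) := by push_cast; ring
    rw [hidx] at hone
    have hmart := hεmart (t - (N : ℕ))
    rw [hidx] at hmart
    have IH' := IH
    have hsplitP : (fun ω =>
        (∑ r ∈ Finset.range N, xi p φ t r * φ 0 (t - r))
        + xi p φ t N * y (t - N) ω
        + (∑ m ∈ Finset.Icc 1 (p - 1), ∑ i ∈ Finset.Icc 1 (p - m),
            φ (m + i) (t - N + i) * xi p φ t ((N : ℤ) - i) * y (t - N - m) ω)
        + ∑ r ∈ Finset.Icc N (N + q - 1),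
            (∑ j ∈ Finset.Icc (r - N + 1) q,
              θ j (t - r + j) * xi p φ t ((r : ℤ) - j)) * ε (t - r) ω)
        = fun ω => G ω + xi p φ t N * y (t - N) ω
            + (∑ j ∈ Finset.Icc (N - N + 1) q,
                θ j (t - N + j) * xi p φ t ((N : ℤ) - j)) * ε (t - N) ω := by
      funext ω
      simp only [hGdef]
      rw [sum_Icc_peel (f := fun r =>
        (∑ j ∈ Finset.Icc (r - N + 1) q,
          θ j (t - r + j) * xi p φ t ((r : ℤ) - j)) * ε (t - r) ω)
        (by omega : N ≤ N + q - 1)]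
      ring
    rw [hsplitP] at IH'
    calc μ[y t | 𝓕 (t - ((N + 1 : ℕ) : ℤ))]
        =ᵐ[μ] μ[μ[y t | 𝓕 (t - (N : ℕ))] | 𝓕 (t - ((N + 1 : ℕ) : ℤ))] :=
          (condExp_condExp_of_le hmle (𝓕.le _)).symm
      _ =ᵐ[μ] μ[(fun ω => G ω
            + xi p φ t N * y (t - N) ω
            + (∑ j ∈ Finset.Icc (N - N + 1) q,
                θ j (t - N + j) * xi p φ t ((N : ℤ) - j)) * ε (t - N) ω) |
              𝓕 (t - ((N + 1 : ℕ) : ℤ))] := condExp_congr_ae IH'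
      _ =ᵐ[μ] fun ω => G ω + xi p φ t N * (fun ω =>
            φ 0 (t - (N : ℕ)) + (∑ m ∈ Finset.Icc 1 p, φ m (t - (N : ℕ)) * y (t - (N : ℕ) - m) ω)
              + ∑ j ∈ Finset.Icc 1 q, θ j (t - (N : ℕ)) * ε (t - (N : ℕ) - j) ω) ω :=
          condexp_decomp (𝓕.le _) G (y (t - (N : ℕ))) (ε (t - (N : ℕ))) _ _ _
            hGm hGi (hyint _) (hεint _) hone hmart
      _ =ᵐ[μ] _ := EventuallyEq.of_eq (funext fun ω => ?_)
    simp only [hGdef]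
    have hY := step_y p φ t hp N (fun s => y s ω)
    have hE := step_epsilon p φ t hq θ N (fun s => ε s ω)
    have hA := Finset.sum_range_succ (fun r => xi p φ t r * φ 0 (t - r)) N
    linear_combination hY + hE - hA
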